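/- Let Ω ⊆ ℝⁿ be a nonempty closed convex set, F : ℝⁿ → ℝⁿ continuous and monotone on Ω and coercive with respect to Ω, and let φ : ℝⁿ → ℝ ∪ {+∞} be convex with effective domain Ω and continuous on Ω, with 0 ∈ ri(dom ∂φ − Ω), S₀ nonempty and closed, and 0 ∈ ri(dom ∂φ − S₀). Suppose the solution set S₀ is weakly sharp of order γ > 1 with sharpness constant α > 0, i.e., G(x) ≥ α · d(x, S₀)^γ for all x ∈ Ω. Then there exists τ > 0 such that for all ε > 0 and all x_ε ∈ S_{Gεφ}, d(x_ε, S₀)^{γ−1} ≤ τ ε. In particular, S_{Gεφ} is bounded for each ε > 0. -/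

import Mathlib

set_option maxHeartbeats 1000000


open Set Pointwise
open scoped InnerProductSpace

/-- The dual gap function `G(x) = sup_{y ∈ Ω} ⟨F(y), x − y⟩`, valued in `EReal`. -/
noncomputable def dualGap {n : ℕ} (Ω : Set (EuclideanSpace ℝ (Fin n)))
    (F : EuclideanSpace ℝ (Fin n) → EuclideanSpace ℝ (Fin n))
    (x : EuclideanSpace ℝ (Fin n)) : EReal :=
  ⨆ y ∈ Ω, ((⟪F y, x - y⟫_ℝ : ℝ) : EReal)

/-- The (convex) subdifferential of φ (viewed as the extended function equal to φ on
Ω and +∞ outside of Ω, so that its effective domain is Ω). -/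
def subdiffOn {n : ℕ} (Ω : Set (EuclideanSpace ℝ (Fin n)))
    (φ : EuclideanSpace ℝ (Fin n) → ℝ) (x : EuclideanSpace ℝ (Fin n)) :
    Set (EuclideanSpace ℝ (Fin n)) :=
  {v | x ∈ Ω ∧ ∀ y ∈ Ω, φ x + ⟪v, y - x⟫_ℝ ≤ φ y}

/-- If `0` lies in the intrinsic (relative) interior of `M` and the linear functional `f`
is nonpositive on `M`, then `f` vanishes on `M`. -/
lemma aux_riZero {E : Type*} [NormedAddCommGroup E] [NormedSpace ℝ E]
    (M : Set E) (f : E →L[ℝ] ℝ) (h0 : (0 : E) ∈ intrinsicInterior ℝ M)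
    (hle : ∀ m ∈ M, f m ≤ 0) : ∀ m ∈ M, f m = 0 := by
  obtain ⟨q, hq, hq0⟩ := mem_intrinsicInterior.1 h0
  intro m hm
  have hmA : m ∈ affineSpan ℝ M := subset_affineSpan ℝ M hm
  have h0A : (0 : E) ∈ affineSpan ℝ M := hq0 ▸ q.2
  have hsm : ∀ t : ℝ, t • m ∈ affineSpan ℝ M := by
    intro t
    have := (affineSpan ℝ M).smul_vsub_vadd_mem t hmA h0A h0A
    simpa using this
  set c : ℝ → affineSpan ℝ M := fun t => ⟨t • m, hsm t⟩ with hc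
  have hcont : Continuous c := by
    apply Continuous.subtype_mk
    exact continuous_id.smul continuous_const
  have hc0 : c 0 = q := by
    apply Subtype.ext
    simp [hc, hq0]
  have hopen : IsOpen (c ⁻¹' interior (((↑) : affineSpan ℝ M → E) ⁻¹' M)) :=
    isOpen_interior.preimage hcont
  have h0mem : (0 : ℝ) ∈ c ⁻¹' interior (((↑) : affineSpan ℝ M → E) ⁻¹' M) := by
    simp only [mem_preimage, hc0]; exact hq
  obtain ⟨ε, hε, hball⟩ := Metric.isOpen_iff.1 hopen 0 h0mem
  have ht : (-(ε / 2)) ∈ Metric.ball (0 : ℝ) ε := by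
    rw [Metric.mem_ball, Real.dist_eq, sub_zero, abs_neg, abs_of_nonneg (by linarith)]
    linarith
  have hmem' : c (-(ε / 2)) ∈ (Subtype.val ⁻¹' M : Set (affineSpan ℝ M)) :=
    interior_subset (hball ht)
  have hmem : ((-(ε / 2)) • m) ∈ M := hmem'
  have hf := hle _ hmem
  rw [map_smul, smul_eq_mul] at hf
  have h1 : 0 ≤ f m := by nlinarith
  exact le_antisymm (hle m hm) h1

/-- Existence of a subgradient of φ at a minimizer over S₀ whose negative is normal to S₀. -/
lemma exists_subgrad {n : ℕ} (Ω S₀ D : Set (EuclideanSpace ℝ (Fin n)))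
    (hne : Ω.Nonempty) (hconv : Convex ℝ Ω)
    (φ : EuclideanSpace ℝ (Fin n) → ℝ)
    (hφconv : ConvexOn ℝ Ω φ) (hφcont : ContinuousOn φ Ω)
    (hS₀sub : S₀ ⊆ Ω) (hS₀conv : Convex ℝ S₀) (hS₀ne : S₀.Nonempty)
    (xb : EuclideanSpace ℝ (Fin n)) (hxbS : xb ∈ S₀)
    (hxbmin : ∀ s ∈ S₀, φ xb ≤ φ s)
    (hDsub : D ⊆ Ω)
    (hri : (0 : EuclideanSpace ℝ (Fin n)) ∈ intrinsicInterior ℝ (D - Ω))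
    (hriS0 : (0 : EuclideanSpace ℝ (Fin n)) ∈ intrinsicInterior ℝ (D - S₀)) :
    ∃ g : EuclideanSpace ℝ (Fin n) →L[ℝ] ℝ,
      (∀ x ∈ Ω, φ xb + g (x - xb) ≤ φ x) ∧ (∀ s ∈ S₀, 0 ≤ g (s - xb)) := by
  classical
  have hxbΩ : xb ∈ Ω := hS₀sub hxbS
  set V : Submodule ℝ (EuclideanSpace ℝ (Fin n)) :=
    Submodule.span ℝ ((fun z => z - xb) '' Ω) with hV
  have hVmem : ∀ x ∈ Ω, x - xb ∈ V := fun x hx => Submodule.subset_span ⟨x, hx, rfl⟩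
  have hVdir : V ≤ (affineSpan ℝ Ω).direction := by
    rw [hV, Submodule.span_le]
    rintro _ ⟨ω, hω, rfl⟩
    exact AffineSubspace.vsub_mem_direction (subset_affineSpan ℝ Ω hω)
      (subset_affineSpan ℝ Ω hxbΩ)
  -- the relative interior substitute
  set U : Set (EuclideanSpace ℝ (Fin n)) :=
    {x | x ∈ Ω ∧ ∃ δ > 0, ∀ z, z - x ∈ V → ‖z - x‖ < δ → z ∈ Ω} with hU
  have hUsub : U ⊆ Ω := fun x hx => hx.1
  -- relative openness of U
  have hUopen : ∀ x ∈ U, ∃ δ > 0, ∀ z, z - x ∈ V → ‖z - x‖ < δ → z ∈ U := by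
    intro x hx
    obtain ⟨hxΩ, δ, hδ, hδz⟩ := hx
    refine ⟨δ / 2, by linarith, fun z hzV hzn => ?_⟩
    refine ⟨hδz z hzV (by linarith), δ / 2, by linarith, fun w hwV hwn => ?_⟩
    have h1 : w - x = (w - z) + (z - x) := by abel
    refine hδz w (by rw [h1]; exact V.add_mem hwV hzV) ?_
    rw [h1]
    calc ‖(w - z) + (z - x)‖ ≤ ‖w - z‖ + ‖z - x‖ := norm_add_le _ _
      _ < δ := by linarith
  -- convexity of U
  have hUconv : Convex ℝ U := by
    rintro x hx y hy a b ha hb hab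
    obtain ⟨hxΩ, δ₁, hδ₁, h₁⟩ := hx
    obtain ⟨hyΩ, δ₂, hδ₂, h₂⟩ := hy
    refine ⟨hconv hxΩ hyΩ ha hb hab, min δ₁ δ₂, lt_min hδ₁ hδ₂, fun z hzV hzn => ?_⟩
    have hx' : x + (z - (a • x + b • y)) ∈ Ω := by
      refine h₁ _ ?_ ?_
      · rw [add_sub_cancel_left]; exact hzV
      · rw [add_sub_cancel_left]; exact lt_of_lt_of_le hzn (min_le_left _ _)
    have hy' : y + (z - (a • x + b • y)) ∈ Ω := by
      refine h₂ _ ?_ ?_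
      · rw [add_sub_cancel_left]; exact hzV
      · rw [add_sub_cancel_left]; exact lt_of_lt_of_le hzn (min_le_right _ _)
    have hzeq : z = a • (x + (z - (a • x + b • y))) + b • (y + (z - (a • x + b • y))) := by
      have h2 : a • (x + (z - (a • x + b • y))) + b • (y + (z - (a • x + b • y)))
          = a • x + b • y + (a + b) • (z - (a • x + b • y)) := by
        rw [add_smul, smul_add, smul_add]; abel
      rw [h2, hab, one_smul]; abel
    rw [hzeq]
    exact hconv hx' hy' ha hb hab
  -- U is nonempty
  have hUne : U.Nonempty := by
    obtain ⟨w, hw⟩ := Set.Nonempty.intrinsicInterior hconv hne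
    obtain ⟨q, hq, hqw⟩ := mem_intrinsicInterior.1 hw
    obtain ⟨δ, hδ, hball⟩ := Metric.isOpen_iff.1 isOpen_interior q hq
    have hwΩ : w ∈ Ω := hqw ▸ (interior_subset hq : q ∈ _root_.Subtype.val ⁻¹' Ω)
    refine ⟨w, hwΩ, δ, hδ, fun z hzV hzn => ?_⟩
    have hwA : w ∈ affineSpan ℝ Ω := hqw ▸ q.2
    have hzA : z ∈ affineSpan ℝ Ω := by
      have h3 := AffineSubspace.vadd_mem_of_mem_direction (hVdir hzV) hwA
      rw [vadd_eq_add, sub_add_cancel] at h3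
      exact h3
    have h4 : (⟨z, hzA⟩ : affineSpan ℝ Ω) ∈ Metric.ball q δ := by
      rw [Metric.mem_ball, Subtype.dist_eq, dist_eq_norm]
      show ‖z - ↑q‖ < δ
      rw [hqw]; exact hzn
    exact (interior_subset (hball h4) : (⟨z, hzA⟩ : affineSpan ℝ Ω) ∈ _root_.Subtype.val ⁻¹' Ω)
  -- density of U in Ω
  have hUdense : ∀ x ∈ Ω, x ∈ closure U := by
    intro x hx
    obtain ⟨w, hwU⟩ := hUne
    rw [mem_closure_iff_seq_limit]
    set t : ℕ → ℝ := fun k => 1 / (k + 2) with htdef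
    have ht0 : ∀ k, 0 < t k := by intro k; positivity
    have ht1 : ∀ k, t k ≤ 1 := by
      intro k
      rw [htdef]
      rw [div_le_one (by positivity)]
      linarith [Nat.cast_nonneg (α := ℝ) k]
    refine ⟨fun k => t k • w + (1 - t k) • x, fun k => ?_, ?_⟩
    · obtain ⟨hwΩ, δ, hδ, hδz⟩ := hwU
      have hk0 := ht0 k
      have hk1 := ht1 k
      refine ⟨hconv hwΩ hx hk0.le (by linarith) (by ring), t k * δ, by positivity,
        fun z hzV hzn => ?_⟩
      have hw' : w + (t k)⁻¹ • (z - (t k • w + (1 - t k) • x)) ∈ Ω := by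
        refine hδz _ ?_ ?_
        · rw [add_sub_cancel_left]; exact V.smul_mem _ hzV
        · rw [add_sub_cancel_left, norm_smul, norm_inv, Real.norm_eq_abs, abs_of_pos hk0,
            inv_mul_lt_iff₀ hk0]
          exact hzn
      have hzeq : z = t k • (w + (t k)⁻¹ • (z - (t k • w + (1 - t k) • x))) + (1 - t k) • x := by
        rw [smul_add, smul_smul, mul_inv_cancel₀ (ne_of_gt hk0), one_smul]
        abel
      rw [hzeq]
      exact hconv hw' hx hk0.le (by linarith) (by ring)
    · have h1 : Filter.Tendsto t Filter.atTop (nhds 0) := by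
        rw [htdef]
        have h0 := (tendsto_natCast_atTop_atTop (R := ℝ)).atTop_add
          (tendsto_const_nhds (x := (2:ℝ)) (f := Filter.atTop))
        simp only [one_div]; exact h0.inv_tendsto_atTop
      have h1' : Filter.Tendsto (fun k : ℕ => (1:ℝ) - t k) Filter.atTop (nhds (1 - 0)) :=
        (tendsto_const_nhds (x := (1:ℝ))).sub h1
      have h2 : Filter.Tendsto (fun k : ℕ => t k • w + (1 - t k) • x)
          Filter.atTop (nhds ((0:ℝ) • w + ((1:ℝ) - 0) • x)) :=
        (h1.smul_const w).add (h1'.smul_const x)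
      rw [sub_zero] at h2
      rw [zero_smul, zero_add, one_smul] at h2
      exact h2
  -- the orthogonal projection onto V
  set P : EuclideanSpace ℝ (Fin n) →L[ℝ] V := V.orthogonalProjectionOnto with hP
  have hPle : ∀ y : EuclideanSpace ℝ (Fin n), ‖(P y : EuclideanSpace ℝ (Fin n))‖ ≤ ‖y‖ := by
    intro y
    calc ‖(P y : EuclideanSpace ℝ (Fin n))‖ = ‖P y‖ := rfl
      _ ≤ ‖P‖ * ‖y‖ := P.le_opNorm y
      _ ≤ 1 * ‖y‖ := by
          have := Submodule.orthogonalProjectionOnto_norm_le V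
          exact mul_le_mul_of_nonneg_right (by rw [hP]; exact this) (norm_nonneg y)
      _ = ‖y‖ := one_mul _
  have hPid : ∀ y ∈ V, ((P y : EuclideanSpace ℝ (Fin n))) = y := by
    intro y hy
    exact V.starProjection_eq_self_iff.2 hy
  -- the two convex sets to be separated
  set A : Set ((EuclideanSpace ℝ (Fin n)) × ℝ) :=
    {p | (xb + (P p.1 : EuclideanSpace ℝ (Fin n))) ∈ U ∧
      φ (xb + (P p.1 : EuclideanSpace ℝ (Fin n))) - φ xb < p.2} with hA
  set B : Set ((EuclideanSpace ℝ (Fin n)) × ℝ) :=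
    {p | (p.1 + xb) ∈ S₀ ∧ p.2 ≤ 0} with hB
  have hmemA : ∀ x ∈ U, ∀ t : ℝ, φ x - φ xb < t → ((x - xb, t) : _ × ℝ) ∈ A := by
    intro x hx t ht
    have h1 : ((P (x - xb) : EuclideanSpace ℝ (Fin n))) = x - xb := hPid _ (hVmem x (hUsub hx))
    constructor
    · show (xb + _) ∈ U
      rw [h1, add_sub_cancel]
      exact hx
    · show φ (xb + _) - φ xb < t
      rw [h1, add_sub_cancel]
      exact ht
  -- A is open
  have hOopen : IsOpen {y : EuclideanSpace ℝ (Fin n) |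
      (xb + (P y : EuclideanSpace ℝ (Fin n))) ∈ U} := by
    rw [Metric.isOpen_iff]
    intro y hy
    obtain ⟨δ, hδ, hδz⟩ := hUopen _ hy
    refine ⟨δ, hδ, fun y' hy' => ?_⟩
    refine hδz _ ?_ ?_
    · have : (xb + (P y' : EuclideanSpace ℝ (Fin n))) - (xb + (P y : EuclideanSpace ℝ (Fin n)))
          = ((P y' : EuclideanSpace ℝ (Fin n)) - (P y : EuclideanSpace ℝ (Fin n))) := by abel
      rw [this]
      exact V.sub_mem (P y').2 (P y).2
    · have h5 : (xb + (P y' : EuclideanSpace ℝ (Fin n))) - (xb + (P y : EuclideanSpace ℝ (Fin n)))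
          = (P (y' - y) : EuclideanSpace ℝ (Fin n)) := by
        rw [map_sub]
        show xb + _ - (xb + _) = _ - _
        abel
      rw [h5]
      calc ‖(P (y' - y) : EuclideanSpace ℝ (Fin n))‖ ≤ ‖y' - y‖ := hPle _
        _ < δ := by rw [← dist_eq_norm]; exact hy'
  have hAopen : IsOpen A := by
    have hcont : ContinuousOn
        (fun p : (EuclideanSpace ℝ (Fin n)) × ℝ =>
          p.2 - (φ (xb + (P p.1 : EuclideanSpace ℝ (Fin n))) - φ xb))
        ({y : EuclideanSpace ℝ (Fin n) |
          (xb + (P y : EuclideanSpace ℝ (Fin n))) ∈ U} ×ˢ (univ : Set ℝ)) := by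
      apply ContinuousOn.sub
      · exact continuous_snd.continuousOn
      · apply ContinuousOn.sub _ continuousOn_const
        have hinner : Continuous (fun p : (EuclideanSpace ℝ (Fin n)) × ℝ =>
            xb + (P p.1 : EuclideanSpace ℝ (Fin n))) := by
          exact continuous_const.add ((V.subtypeL.comp P).continuous.comp continuous_fst)
        apply hφcont.comp hinner.continuousOn
        rintro ⟨y, t⟩ ⟨hyU, -⟩
        exact hUsub hyU
    have heq : A = ({y : EuclideanSpace ℝ (Fin n) |
          (xb + (P y : EuclideanSpace ℝ (Fin n))) ∈ U} ×ˢ (univ : Set ℝ)) ∩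
        ((fun p : (EuclideanSpace ℝ (Fin n)) × ℝ =>
          p.2 - (φ (xb + (P p.1 : EuclideanSpace ℝ (Fin n))) - φ xb)) ⁻¹' (Ioi 0)) := by
      ext ⟨y, t⟩
      simp only [hA, mem_setOf_eq, mem_inter_iff, mem_prod, mem_univ, and_true, mem_preimage,
        mem_Ioi]
      constructor
      · rintro ⟨h1, h2⟩; exact ⟨h1, by linarith⟩
      · rintro ⟨h1, h2⟩; exact ⟨h1, by linarith⟩
    rw [heq]
    refine hcont.isOpen_inter_preimage ?_ isOpen_Ioi
    exact hOopen.prod isOpen_univ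
  -- A is convex
  have hAconv : Convex ℝ A := by
    rintro ⟨y₁, t₁⟩ ⟨h₁U, h₁t⟩ ⟨y₂, t₂⟩ ⟨h₂U, h₂t⟩ a b ha hb hab
    have hPcombo : xb + (P (a • y₁ + b • y₂) : EuclideanSpace ℝ (Fin n))
        = a • (xb + (P y₁ : EuclideanSpace ℝ (Fin n)))
          + b • (xb + (P y₂ : EuclideanSpace ℝ (Fin n))) := by
      rw [map_add, map_smul, map_smul]
      push_cast
      rw [smul_add, smul_add]
      have : a • xb + b • xb = xb := by rw [← add_smul, hab, one_smul]
      rw [show a • xb + a • (P y₁ : EuclideanSpace ℝ (Fin n))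
          + (b • xb + b • (P y₂ : EuclideanSpace ℝ (Fin n)))
          = (a • xb + b • xb) + (a • (P y₁ : EuclideanSpace ℝ (Fin n))
            + b • (P y₂ : EuclideanSpace ℝ (Fin n))) from by abel, this]
    constructor
    · show (xb + (P ((a • (y₁, t₁) + b • (y₂, t₂) : _ × ℝ).1) : EuclideanSpace ℝ (Fin n))) ∈ U
      show (xb + (P (a • y₁ + b • y₂) : EuclideanSpace ℝ (Fin n))) ∈ U
      rw [hPcombo]
      exact hUconv h₁U h₂U ha hb hab
    · show φ (xb + (P (a • y₁ + b • y₂) : EuclideanSpace ℝ (Fin n))) - φ xb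
        < a * t₁ + b * t₂
      rw [hPcombo]
      have hc := hφconv.2 (hUsub h₁U) (hUsub h₂U) ha hb hab
      have hcomb : a * (φ (xb + (P y₁ : EuclideanSpace ℝ (Fin n))) - φ xb)
          + b * (φ (xb + (P y₂ : EuclideanSpace ℝ (Fin n))) - φ xb) < a * t₁ + b * t₂ := by
        rcases eq_or_lt_of_le ha with h | h
        · have hb1 : b = 1 := by linarith
          rw [← h, hb1]
          simp only [zero_mul, one_mul, zero_add]
          exact h₂t
        · have e1 : a * (φ (xb + (P y₁ : EuclideanSpace ℝ (Fin n))) - φ xb) < a * t₁ :=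
            (mul_lt_mul_iff_right₀ h).2 h₁t
          have e2 : b * (φ (xb + (P y₂ : EuclideanSpace ℝ (Fin n))) - φ xb) ≤ b * t₂ :=
            mul_le_mul_of_nonneg_left h₂t.le hb
          linarith
      have hφxb : φ xb = a * φ xb + b * φ xb := by rw [← add_mul, hab, one_mul]
      calc φ (a • (xb + (P y₁ : EuclideanSpace ℝ (Fin n)))
            + b • (xb + (P y₂ : EuclideanSpace ℝ (Fin n)))) - φ xb
          ≤ a * φ (xb + (P y₁ : EuclideanSpace ℝ (Fin n)))
            + b * φ (xb + (P y₂ : EuclideanSpace ℝ (Fin n))) - φ xb := by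
            have := hc; simp only [smul_eq_mul] at this; linarith
        _ = a * (φ (xb + (P y₁ : EuclideanSpace ℝ (Fin n))) - φ xb)
            + b * (φ (xb + (P y₂ : EuclideanSpace ℝ (Fin n))) - φ xb) := by
            linear_combination φ xb * hab
        _ < a * t₁ + b * t₂ := hcomb
  -- B is convex
  have hBconv : Convex ℝ B := by
    rintro ⟨y₁, t₁⟩ ⟨h₁S, h₁t⟩ ⟨y₂, t₂⟩ ⟨h₂S, h₂t⟩ a b ha hb hab
    constructor
    · show (a • y₁ + b • y₂) + xb ∈ S₀
      have : (a • y₁ + b • y₂) + xb = a • (y₁ + xb) + b • (y₂ + xb) := by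
        rw [smul_add, smul_add]
        rw [show a • y₁ + a • xb + (b • y₂ + b • xb)
            = (a • y₁ + b • y₂) + (a • xb + b • xb) from by abel, ← add_smul, hab, one_smul]
      rw [this]
      exact hS₀conv h₁S h₂S ha hb hab
    · show a * t₁ + b * t₂ ≤ 0
      have e1 : a * t₁ ≤ 0 := mul_nonpos_of_nonneg_of_nonpos ha h₁t
      have e2 : b * t₂ ≤ 0 := mul_nonpos_of_nonneg_of_nonpos hb h₂t
      linarith
  -- A and B are disjoint
  have hdisj : Disjoint A B := by
    rw [Set.disjoint_left]
    rintro ⟨y, t⟩ ⟨hAU, hAt⟩ ⟨hBS, hBt⟩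
    have hyV : y ∈ V := by
      have := hVmem (y + xb) (hS₀sub hBS)
      rwa [add_sub_cancel_right] at this
    have h1 : ((P y : EuclideanSpace ℝ (Fin n))) = y := hPid _ hyV
    rw [h1] at hAU hAt
    have h2 : xb + y = y + xb := add_comm _ _
    rw [h2] at hAU hAt
    have := hxbmin _ hBS
    linarith
  -- separate
  obtain ⟨f, u, hfA, hfB⟩ := geometric_hahn_banach_open hAconv hAopen hBconv hdisj
  set β : ℝ := f (0, 1) with hβdef
  set f₁ : EuclideanSpace ℝ (Fin n) →L[ℝ] ℝ :=
    f.comp (ContinuousLinearMap.inl ℝ (EuclideanSpace ℝ (Fin n)) ℝ) with hf₁def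
  have hdecomp : ∀ (y : EuclideanSpace ℝ (Fin n)) (t : ℝ), f (y, t) = f₁ y + t * β := by
    intro y t
    have h1 : ((y, t) : _ × ℝ) = (y, 0) + (0, t) := by simp
    rw [h1, map_add]
    have h2 : ((0, t) : EuclideanSpace ℝ (Fin n) × ℝ) = t • ((0, 1) : _ × ℝ) := by simp
    rw [h2, map_smul]
    rw [smul_eq_mul]
    rfl
  -- β ≤ 0
  obtain ⟨w, hwU⟩ := hUne
  have hβ : β ≤ 0 := by
    by_contra hβpos
    push_neg at hβpos
    set T : ℝ := max (φ w - φ xb + 1) ((u - f₁ (w - xb)) / β) with hT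
    have hTA : ((w - xb, T) : _ × ℝ) ∈ A :=
      hmemA w hwU T (lt_of_lt_of_le (by linarith) (le_max_left _ _))
    have := hfA _ hTA
    rw [hdecomp] at this
    have h2 : (u - f₁ (w - xb)) / β ≤ T := le_max_right _ _
    rw [div_le_iff₀ hβpos] at h2
    linarith
  -- the key inequality on U, then on Ω
  have hAle : ∀ x ∈ U, f₁ (x - xb) + (φ x - φ xb) * β ≤ u := by
    intro x hx
    by_contra hcon
    push_neg at hcon
    rcases lt_or_eq_of_le hβ with hβlt | hβ0
    · set η : ℝ := (f₁ (x - xb) + (φ x - φ xb) * β - u) / (-β) / 2 with hη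
      have hηpos : 0 < η := by
        rw [hη]
        exact div_pos (div_pos (by linarith) (by linarith)) two_pos
      have hxA : ((x - xb, φ x - φ xb + η) : _ × ℝ) ∈ A := hmemA x hx _ (by linarith)
      have h3 := hfA _ hxA
      rw [hdecomp] at h3
      have hβne : β ≠ 0 := by linarith
      have h4 : η * (-β) = (f₁ (x - xb) + (φ x - φ xb) * β - u) / 2 := by
        rw [hη]
        field_simp
      nlinarith
    · have hxA : ((x - xb, φ x - φ xb + 1) : _ × ℝ) ∈ A := hmemA x hx _ (by linarith)
      have h3 := hfA _ hxA
      rw [hdecomp] at h3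
      rw [hβ0, mul_zero, add_zero] at hcon h3
      linarith
  have hΩle : ∀ x ∈ Ω, f₁ (x - xb) + (φ x - φ xb) * β ≤ u := by
    intro x hx
    obtain ⟨seq, hseqU, hseqlim⟩ := mem_closure_iff_seq_limit.1 (hUdense x hx)
    have hseqΩ : ∀ k, seq k ∈ Ω := fun k => hUsub (hseqU k)
    have hlim : Filter.Tendsto (fun k => f₁ (seq k - xb) + (φ (seq k) - φ xb) * β)
        Filter.atTop (nhds (f₁ (x - xb) + (φ x - φ xb) * β)) := by
      have hφlim : Filter.Tendsto (fun k => φ (seq k)) Filter.atTop (nhds (φ x)) := by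
        have h5 : Filter.Tendsto seq Filter.atTop (nhdsWithin x Ω) := by
          apply tendsto_nhdsWithin_of_tendsto_nhds_of_eventually_within _ hseqlim
          exact Filter.Eventually.of_forall hseqΩ
        exact (hφcont x hx).tendsto.comp h5
      have hflim : Filter.Tendsto (fun k => f₁ (seq k - xb)) Filter.atTop
          (nhds (f₁ (x - xb))) := by
        have : Filter.Tendsto (fun k => seq k - xb) Filter.atTop (nhds (x - xb)) :=
          hseqlim.sub tendsto_const_nhds
        exact (f₁.continuous.tendsto _).comp this
      exact hflim.add (((hφlim.sub tendsto_const_nhds).mul_const β))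
    exact le_of_tendsto hlim (Filter.Eventually.of_forall fun k => hAle _ (hseqU k))
  have hBle : ∀ s ∈ S₀, u ≤ f₁ (s - xb) := by
    intro s hs
    have hsB : ((s - xb, 0) : _ × ℝ) ∈ B := by
      constructor
      · show s - xb + xb ∈ S₀
        rw [sub_add_cancel]
        exact hs
      · exact le_refl 0
    have := hfB _ hsB
    rw [hdecomp] at this
    linarith
  have hu0 : u = 0 := by
    have h1 := hBle xb hxbS
    have h2 := hΩle xb hxbΩ
    simp only [sub_self, map_zero, zero_add, zero_mul, mul_zero, add_zero] at h1 h2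
    linarith
  -- exclude β = 0 using the relative interior conditions
  rcases lt_or_eq_of_le hβ with hβlt | hβ0
  · -- β < 0 : construct the subgradient
    refine ⟨(-β)⁻¹ • f₁, ?_, ?_⟩
    · intro x hx
      have h1 := hΩle x hx
      rw [hu0] at h1
      have hnegβ : 0 < -β := by linarith
      have h2 : f₁ (x - xb) ≤ (φ x - φ xb) * (-β) := by nlinarith
      have h3 : ((-β)⁻¹ • f₁) (x - xb) = (-β)⁻¹ * f₁ (x - xb) := rfl
      have h5 : (-β)⁻¹ * f₁ (x - xb) ≤ φ x - φ xb := by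
        rw [inv_mul_le_iff₀ hnegβ]
        nlinarith
      rw [h3]
      linarith
    · intro s hs
      have h1 := hBle s hs
      rw [hu0] at h1
      have hnegβ : 0 < -β := by linarith
      have h3 : ((-β)⁻¹ • f₁) (s - xb) = (-β)⁻¹ * f₁ (s - xb) := rfl
      rw [h3]
      exact mul_nonneg (by positivity) h1
  · -- β = 0 : contradiction
    exfalso
    have hf₁Ω : ∀ x ∈ Ω, f₁ (x - xb) ≤ 0 := by
      intro x hx
      have h6 := hΩle x hx
      rw [hβ0, mul_zero, add_zero, hu0] at h6
      exact h6
    have hf₁S : ∀ s ∈ S₀, f₁ (s - xb) = 0 := by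
      intro s hs
      have h1 := hBle s hs
      rw [hu0] at h1
      exact le_antisymm (hf₁Ω s (hS₀sub hs)) h1
    have hstrict : f₁ (w - xb) < 0 := by
      have hxA : ((w - xb, φ w - φ xb + 1) : _ × ℝ) ∈ A := hmemA w hwU _ (by linarith)
      have h3 := hfA _ hxA
      rw [hdecomp, hβ0, mul_zero, add_zero, hu0] at h3
      exact h3
    -- f₁ vanishes on D - xb
    have hDzero : ∀ d ∈ D, f₁ (d - xb) = 0 := by
      have hle2 : ∀ m ∈ D - S₀, f₁ m ≤ 0 := by
        rintro m ⟨d, hd, s, hs, rfl⟩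
        show f₁ (d - s) ≤ 0
        have h1 : d - s = (d - xb) - (s - xb) := by abel
        rw [h1, map_sub, hf₁S s hs, sub_zero]
        exact hf₁Ω d (hDsub hd)
      have hzero := aux_riZero _ f₁ hriS0 hle2
      intro d hd
      obtain ⟨s₀, hs₀⟩ := hS₀ne
      have h1 : d - s₀ ∈ D - S₀ := ⟨d, hd, s₀, hs₀, rfl⟩
      have h2 := hzero _ h1
      have h3 : d - s₀ = (d - xb) - (s₀ - xb) := by abel
      rw [h3, map_sub, hf₁S s₀ hs₀, sub_zero] at h2
      exact h2
    -- f₁ vanishes on Ω - xb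
    have hΩzero : ∀ x ∈ Ω, f₁ (x - xb) = 0 := by
      have hle2 : ∀ m ∈ D - Ω, (-f₁) m ≤ 0 := by
        rintro m ⟨d, hd, x, hx, rfl⟩
        show (-f₁) (d - x) ≤ 0
        have h1 : d - x = (d - xb) - (x - xb) := by abel
        have h2 : (-f₁) (d - x) = -(f₁ (d - x)) := rfl
        rw [h2, h1, map_sub, hDzero d hd, zero_sub, neg_neg]
        exact hf₁Ω x hx
      have hzero := aux_riZero _ (-f₁) hri hle2
      intro x hx
      obtain ⟨d₀, hd₀⟩ : D.Nonempty := by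
        obtain ⟨m, hm⟩ : (D - S₀).Nonempty := ⟨0, intrinsicInterior_subset hriS0⟩
        obtain ⟨d, hd, -⟩ := hm
        exact ⟨d, hd⟩
      have h1 : d₀ - x ∈ D - Ω := ⟨d₀, hd₀, x, hx, rfl⟩
      have h2 := hzero _ h1
      have h3 : (-f₁) (d₀ - x) = -(f₁ (d₀ - x)) := rfl
      have h4 : d₀ - x = (d₀ - xb) - (x - xb) := by abel
      rw [h3, h4, map_sub, hDzero d₀ hd₀, zero_sub, neg_neg] at h2
      exact h2
    have := hΩzero w (hUsub hwU)
    linarith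
/-- if S₀ is weakly sharp of order γ > 1 with sharpness constant
α > 0, then there is τ > 0 with d(x_ε, S₀)^(γ−1) ≤ τ ε for all ε > 0 and all
x_ε ∈ S_{Gεφ}; in particular S_{Gεφ} is bounded for each ε > 0. -/
theorem error_bound_for_regularized_dual_gap {n : ℕ}
    (Ω : Set (EuclideanSpace ℝ (Fin n)))
    (hne : Ω.Nonempty) (hcl : IsClosed Ω) (hconv : Convex ℝ Ω)
    (F : EuclideanSpace ℝ (Fin n) → EuclideanSpace ℝ (Fin n))
    (hFcont : ContinuousOn F Ω)
    (hFmono : ∀ x ∈ Ω, ∀ y ∈ Ω, 0 ≤ ⟪F x - F y, x - y⟫_ℝ)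
    (hcoer : ∃ γ' : ℝ, 0 < γ' ∧ ∀ x₀ ∈ Ω, ∃ c : ℝ, 0 < c ∧ ∃ R : ℝ,
      ∀ x ∈ Ω, R ≤ ‖x‖ → c ≤ ⟪F x, x - x₀⟫_ℝ / ‖x‖ ^ γ')
    (φ : EuclideanSpace ℝ (Fin n) → ℝ)
    (hφconv : ConvexOn ℝ Ω φ) (hφcont : ContinuousOn φ Ω)
    (hri : (0 : EuclideanSpace ℝ (Fin n)) ∈
      intrinsicInterior ℝ ({x | (subdiffOn Ω φ x).Nonempty} - Ω))
    (hS0ne : ({x | x ∈ Ω ∧ ∀ y ∈ Ω, 0 ≤ ⟪F x, y - x⟫_ℝ}).Nonempty)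
    (hS0cl : IsClosed {x : (EuclideanSpace ℝ (Fin n)) |
      x ∈ Ω ∧ ∀ y ∈ Ω, 0 ≤ ⟪F x, y - x⟫_ℝ})
    (hriS0 : (0 : EuclideanSpace ℝ (Fin n)) ∈
      intrinsicInterior ℝ ({x | (subdiffOn Ω φ x).Nonempty} -
        {x | x ∈ Ω ∧ ∀ y ∈ Ω, 0 ≤ ⟪F x, y - x⟫_ℝ}))
    (γ α : ℝ) (hγ : 1 < γ) (hα : 0 < α)
    -- weak sharpness of order γ: G(x) ≥ α d(x, S₀)^γ on Ω
    (hsharp : ∀ x ∈ Ω,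
      ((α * Metric.infDist x {x | x ∈ Ω ∧ ∀ y ∈ Ω, 0 ≤ ⟪F x, y - x⟫_ℝ} ^ γ : ℝ) :
        EReal) ≤ dualGap Ω F x) :
    (∃ τ : ℝ, 0 < τ ∧ ∀ ε : ℝ, 0 < ε →
      ∀ xe ∈ {x | x ∈ Ω ∧ ∀ z ∈ Ω, dualGap Ω F x + ((ε * φ x : ℝ) : EReal) ≤
          dualGap Ω F z + ((ε * φ z : ℝ) : EReal)},
        Metric.infDist xe {x | x ∈ Ω ∧ ∀ y ∈ Ω, 0 ≤ ⟪F x, y - x⟫_ℝ} ^ (γ - 1)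
          ≤ τ * ε) ∧
    (∀ ε : ℝ, 0 < ε →
      Bornology.IsBounded
        {x | x ∈ Ω ∧ ∀ z ∈ Ω, dualGap Ω F x + ((ε * φ x : ℝ) : EReal) ≤
          dualGap Ω F z + ((ε * φ z : ℝ) : EReal)}) := by
  classical
  set S₀ : Set (EuclideanSpace ℝ (Fin n)) :=
    {x | x ∈ Ω ∧ ∀ y ∈ Ω, 0 ≤ ⟪F x, y - x⟫_ℝ} with hS₀def
  set D : Set (EuclideanSpace ℝ (Fin n)) := {x | (subdiffOn Ω φ x).Nonempty} with hDdef
  have hS₀sub : S₀ ⊆ Ω := fun x hx => hx.1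
  -- S₀ is bounded
  obtain ⟨γ', hγ', hco⟩ := hcoer
  obtain ⟨x₀, hx₀⟩ := hne
  obtain ⟨c, hc, R, hR⟩ := hco x₀ hx₀
  have hS₀bdd : ∀ x ∈ S₀, ‖x‖ ≤ max R 0 + 1 := by
    intro x hx
    by_contra hcon
    push_neg at hcon
    have hxR : R ≤ ‖x‖ := by linarith [le_max_left R 0]
    have h1 := hR x hx.1 hxR
    have h2 : ⟪F x, x - x₀⟫_ℝ ≤ 0 := by
      have h3 := hx.2 x₀ hx₀
      rw [show x₀ - x = -(x - x₀) from by abel, inner_neg_right] at h3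
      linarith
    have hxpos : (0:ℝ) < ‖x‖ := by linarith [le_max_right R 0]
    have hpow : (0:ℝ) < ‖x‖ ^ γ' := Real.rpow_pos_of_pos hxpos γ'
    have h4 : ⟪F x, x - x₀⟫_ℝ / ‖x‖ ^ γ' ≤ 0 :=
      div_nonpos_of_nonpos_of_nonneg h2 hpow.le
    linarith
  have hS₀bdd' : Bornology.IsBounded S₀ :=
    Bornology.IsBounded.subset (Metric.isBounded_closedBall
      (x := (0 : EuclideanSpace ℝ (Fin n))) (r := max R 0 + 1))
      (fun x hx => mem_closedBall_zero_iff.2 (hS₀bdd x hx))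
  have hS₀cpt : IsCompact S₀ := Metric.isCompact_of_isClosed_isBounded hS0cl hS₀bdd'
  -- S₀ is convex via Minty's lemma
  have hS₀conv : Convex ℝ S₀ := by
    set Sm : Set (EuclideanSpace ℝ (Fin n)) :=
      {x | x ∈ Ω ∧ ∀ y ∈ Ω, 0 ≤ ⟪F y, y - x⟫_ℝ} with hSm
    have hSmconv : Convex ℝ Sm := by
      rintro x₁ ⟨h₁Ω, h₁⟩ x₂ ⟨h₂Ω, h₂⟩ a b ha hb hab
      refine ⟨hconv h₁Ω h₂Ω ha hb hab, fun y hy => ?_⟩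
      have e1 : y - (a • x₁ + b • x₂) = a • (y - x₁) + b • (y - x₂) := by
        rw [smul_sub, smul_sub,
          show a • y - a • x₁ + (b • y - b • x₂)
            = (a • y + b • y) - (a • x₁ + b • x₂) from by abel, ← add_smul, hab, one_smul]
      rw [e1, inner_add_right, real_inner_smul_right, real_inner_smul_right]
      have e2 := h₁ y hy
      have e3 := h₂ y hy
      have e4 : 0 ≤ a * ⟪F y, y - x₁⟫_ℝ := mul_nonneg ha e2
      have e5 : 0 ≤ b * ⟪F y, y - x₂⟫_ℝ := mul_nonneg hb e3
      linarith
    have heq : S₀ = Sm := by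
      apply Subset.antisymm
      · rintro x ⟨hxΩ, hx⟩
        refine ⟨hxΩ, fun y hy => ?_⟩
        have h1 := hFmono y hy x hxΩ
        rw [inner_sub_left] at h1
        have h2 := hx y hy
        linarith
      · rintro x ⟨hxΩ, hx⟩
        refine ⟨hxΩ, fun y hy => ?_⟩
        have hz : ∀ t : ℝ, t ∈ Ioc (0:ℝ) 1 → 0 ≤ ⟪F (x + t • (y - x)), y - x⟫_ℝ := by
          rintro t ⟨ht0, ht1⟩
          have hmem : x + t • (y - x) ∈ Ω := by
            have h0 : x + t • (y - x) = (1 - t) • x + t • y := by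
              rw [smul_sub, sub_smul, one_smul]
              abel
            rw [h0]
            exact hconv hxΩ hy (by linarith) ht0.le (by ring)
          have h1 := hx _ hmem
          rw [add_sub_cancel_left, real_inner_smul_right] at h1
          by_contra hcon
          push_neg at hcon
          nlinarith
        have hzt : Filter.Tendsto (fun t : ℝ => x + t • (y - x)) (nhdsWithin 0 (Ioi 0))
            (nhdsWithin x Ω) := by
          apply tendsto_nhdsWithin_of_tendsto_nhds_of_eventually_within
          · have hcont : Continuous (fun t : ℝ => x + t • (y - x)) :=
              continuous_const.add (continuous_id.smul continuous_const)
            have h9 : Filter.Tendsto (fun t : ℝ => x + t • (y - x)) (nhdsWithin 0 (Ioi 0))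
                (nhds (x + (0:ℝ) • (y - x))) :=
              (hcont.tendsto 0).mono_left nhdsWithin_le_nhds
            simpa using h9
          · filter_upwards [Ioc_mem_nhdsGT_of_mem (Set.mem_Ico.2 ⟨le_refl 0, zero_lt_one⟩)]
              with t ht
            have h0 : x + t • (y - x) = (1 - t) • x + t • y := by
              rw [smul_sub, sub_smul, one_smul]
              abel
            rw [h0]
            exact hconv hxΩ hy (by linarith [ht.2]) ht.1.le (by ring)
        have hlim : Filter.Tendsto (fun t : ℝ => ⟪F (x + t • (y - x)), y - x⟫_ℝ)
            (nhdsWithin 0 (Ioi 0)) (nhds ⟪F x, y - x⟫_ℝ) := by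
          have hF := (hFcont x hxΩ).tendsto.comp hzt
          exact hF.inner tendsto_const_nhds
        refine ge_of_tendsto hlim ?_
        filter_upwards [Ioc_mem_nhdsGT_of_mem (Set.mem_Ico.2 ⟨le_refl 0, zero_lt_one⟩)]
          with t ht
        exact hz t ht
    rw [heq]
    exact hSmconv
  -- minimizer of φ over S₀
  obtain ⟨xb, hxbS, hxbmin⟩ := hS₀cpt.exists_isMinOn hS0ne (hφcont.mono hS₀sub)
  have hxbΩ : xb ∈ Ω := hS₀sub hxbS
  -- the subgradient
  have hDsub : D ⊆ Ω := by
    rintro d ⟨v, hv⟩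
    exact hv.1
  obtain ⟨g, hg1, hg2⟩ := exists_subgrad Ω S₀ D ⟨x₀, hx₀⟩ hconv φ hφconv hφcont hS₀sub
    hS₀conv hS0ne xb hxbS (fun s hs => hxbmin hs) hDsub hri hriS0
  -- the dual gap vanishes at xb
  have hGxb : dualGap Ω F xb = 0 := by
    apply le_antisymm
    · unfold dualGap
      refine iSup₂_le fun y hy => ?_
      have hm := hFmono xb hxbΩ y hy
      rw [inner_sub_left] at hm
      have h2 := hxbS.2 y hy
      have h3 : ⟪F xb, xb - y⟫_ℝ = -⟪F xb, y - xb⟫_ℝ := by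
        rw [show xb - y = -(y - xb) from by abel, inner_neg_right]
      have h4 : ⟪F y, xb - y⟫_ℝ ≤ 0 := by linarith
      exact_mod_cast h4
    · have h5 : ((0:ℝ):EReal) ≤ dualGap Ω F xb := by
        unfold dualGap
        refine le_iSup₂_of_le xb hxbΩ ?_
        rw [sub_self, inner_zero_right]
      exact_mod_cast h5
  -- the main estimate
  have hmain : ∀ ε : ℝ, 0 < ε →
      ∀ xe ∈ {x | x ∈ Ω ∧ ∀ z ∈ Ω, dualGap Ω F x + ((ε * φ x : ℝ) : EReal) ≤
          dualGap Ω F z + ((ε * φ z : ℝ) : EReal)},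
        Metric.infDist xe S₀ ^ (γ - 1) ≤ (‖g‖ / α + 1) * ε := by
    intro ε hε xe hxe
    obtain ⟨hxeΩ, hxemin⟩ := hxe
    set d := Metric.infDist xe S₀ with hd
    have h1 := hxemin xb hxbΩ
    rw [hGxb, zero_add] at h1
    have h2 := hsharp xe hxeΩ
    have h3 : ((α * d ^ γ + ε * φ xe : ℝ) : EReal) ≤ ((ε * φ xb : ℝ) : EReal) := by
      rw [EReal.coe_add]
      calc ((α * d ^ γ : ℝ):EReal) + ((ε * φ xe : ℝ):EReal)
          ≤ dualGap Ω F xe + ((ε * φ xe : ℝ):EReal) := add_le_add_left h2 _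
        _ ≤ ((ε * φ xb : ℝ):EReal) := h1
    have hkey : α * d ^ γ ≤ ε * (φ xb - φ xe) := by
      have h4 := EReal.coe_le_coe_iff.1 h3
      have h5 : ε * (φ xb - φ xe) = ε * φ xb - ε * φ xe := by ring
      linarith
    obtain ⟨sstar, hsstar, hdist⟩ := hS₀cpt.exists_infDist_eq_dist hS0ne xe
    have hφb : φ xb - φ xe ≤ ‖g‖ * d := by
      have ha := hg1 xe hxeΩ
      have hb := hg2 sstar hsstar
      rw [map_sub] at ha hb
      have hnorm : g sstar - g xe ≤ ‖g‖ * ‖sstar - xe‖ := by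
        calc g sstar - g xe = g (sstar - xe) := (map_sub g _ _).symm
          _ ≤ |g (sstar - xe)| := le_abs_self _
          _ = ‖g (sstar - xe)‖ := (Real.norm_eq_abs _).symm
          _ ≤ ‖g‖ * ‖sstar - xe‖ := g.le_opNorm _
      have hde : ‖sstar - xe‖ = d := by
        rw [norm_sub_rev, ← dist_eq_norm, hd, hdist]
      rw [hde] at hnorm
      linarith
    have hd0 : 0 ≤ d := Metric.infDist_nonneg
    rcases eq_or_lt_of_le hd0 with hdeq | hdpos
    · rw [← hdeq, Real.zero_rpow (by intro h; apply absurd h; intro h2; linarith : γ - 1 ≠ 0)]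
      positivity
    · have e0 : γ - 1 + 1 = γ := by ring
      have hγd : d ^ γ = d ^ (γ - 1) * d := by
        calc d ^ γ = d ^ (γ - 1 + 1) := by rw [e0]
          _ = d ^ (γ - 1) * d ^ (1:ℝ) := Real.rpow_add hdpos _ _
          _ = d ^ (γ - 1) * d := by rw [Real.rpow_one]
      have h6 : (α * d ^ (γ - 1)) * d ≤ (ε * ‖g‖) * d := by
        have h7 : α * d ^ γ ≤ ε * (‖g‖ * d) :=
          le_trans hkey (mul_le_mul_of_nonneg_left hφb hε.le)
        rw [hγd] at h7
        nlinarith [h7]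
      have h8 : α * d ^ (γ - 1) ≤ ε * ‖g‖ := le_of_mul_le_mul_right h6 hdpos
      have h9 : d ^ (γ - 1) ≤ ε * ‖g‖ / α := by
        rw [le_div_iff₀ hα]
        nlinarith [h8]
      calc d ^ (γ - 1) ≤ ε * ‖g‖ / α := h9
        _ = ‖g‖ / α * ε := by ring
        _ ≤ (‖g‖ / α + 1) * ε := by nlinarith [hε]
  refine ⟨⟨‖g‖ / α + 1, by positivity, hmain⟩, ?_⟩
  -- boundedness
  intro ε hε
  set Md : ℝ := ((‖g‖ / α + 1) * ε) ^ (γ - 1)⁻¹ with hMd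
  apply Bornology.IsBounded.subset (Metric.isBounded_closedBall
    (x := (0 : EuclideanSpace ℝ (Fin n))) (r := (max R 0 + 1) + Md))
  intro x hx
  have h1 := hmain ε hε x hx
  have hd0 : 0 ≤ Metric.infDist x S₀ := Metric.infDist_nonneg
  have h2 : Metric.infDist x S₀ ≤ Md := by
    have e1 : Metric.infDist x S₀ = (Metric.infDist x S₀ ^ (γ - 1)) ^ (γ - 1)⁻¹ :=
      (Real.rpow_rpow_inv hd0 (by intro h; apply absurd h; intro h2; linarith)).symm
    rw [e1, hMd]
    exact Real.rpow_le_rpow (Real.rpow_nonneg hd0 _) h1 (inv_pos.2 (by linarith)).le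
  obtain ⟨s, hs, hds⟩ := hS₀cpt.exists_infDist_eq_dist hS0ne x
  rw [Metric.mem_closedBall, dist_zero_right]
  have h3 : ‖x‖ ≤ ‖s‖ + dist x s := by
    calc ‖x‖ = ‖s + (x - s)‖ := by congr 1; abel
      _ ≤ ‖s‖ + ‖x - s‖ := norm_add_le _ _
      _ = ‖s‖ + dist x s := by rw [dist_eq_norm]
  have h4 := hS₀bdd s hs
  rw [← hds] at h3
  linarith
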